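/- (First-best solution through targeted explanation.) Let ū and w̄ be square-integrable random vectors in ℝⁿ (the bliss points of the agent and the principal, respectively), let Ω be a fixed real symmetric positive definite n×n matrix (the agent's weight matrix), and let 1 ≤ k ≤ n. If the rank of E[(ū − w̄)(ū − w̄)ᵀ] is at most k, then there exists a matrix E ∈ ℝ^{k×n} (the targeted explainer) such that, almost surely, the unique minimizer of f ↦ (f − ū)ᵀ Ω (f − ū) over the affine set {f ∈ ℝⁿ : E f = E w̄} is f = w̄. In particular, the explainer constraint E f = E w̄ induces the agent to choose the principal's bliss point in every state, achieving the first-best welfare, without any ex-ante restriction of the choice set. -/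

import Mathlib

open MeasureTheory Matrix

private lemma l2_mul_integrable' {α : Type*} [MeasurableSpace α] {μ : Measure α}
    {f g : α → ℝ} (hf : MemLp f 2 μ) (hg : MemLp g 2 μ) :
    Integrable (fun ω => f ω * g ω) μ := by
  have h1 := (hf.add hg).integrable_sq
  have h2 := hf.integrable_sq
  have h3 := hg.integrable_sq
  have h := ((h1.sub h2).sub h3).const_mul (1/2 : ℝ)
  refine h.congr ?_
  filter_upwards with ω
  simp only [Pi.sub_apply, Pi.add_apply]
  ring

private lemma sum_dotProduct' {n : ℕ} {ι : Type*} (s : Finset ι) (a : ι → Fin n → ℝ)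
    (c : Fin n → ℝ) : (∑ j ∈ s, a j) ⬝ᵥ c = ∑ j ∈ s, a j ⬝ᵥ c := by
  simp only [dotProduct, Finset.sum_apply, Finset.sum_mul]
  exact Finset.sum_comm

private lemma inner_eq_dot' {n : ℕ} (u x : EuclideanSpace ℝ (Fin n)) :
    (inner ℝ u x : ℝ) = (u : Fin n → ℝ) ⬝ᵥ (x : Fin n → ℝ) := by
  simp [PiLp.inner_apply, dotProduct, RCLike.inner_apply, mul_comm]

/-- First-best solution through targeted explanation: if the rank of the
misalignment second-moment matrix `E[(ū − w̄)(ū − w̄)ᵀ]` is at most `k`, there is a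
`k`-dimensional linear explainer `E` such that almost surely the unique minimizer of the
agent's quadratic loss `(f − ū)ᵀ Ω (f − ū)` over `{f : E f = E w̄}` is `f = w̄`. -/
theorem firstBest_through_targeted_explainer
    {α : Type*} [MeasurableSpace α] (μ : Measure α) [IsProbabilityMeasure μ]
    (n k : ℕ) (hk1 : 1 ≤ k) (hkn : k ≤ n)
    (ubar wbar : α → Fin n → ℝ)
    (hu : ∀ i, MemLp (fun ω => ubar ω i) 2 μ)
    (hw : ∀ i, MemLp (fun ω => wbar ω i) 2 μ)
    (Ω : Matrix (Fin n) (Fin n) ℝ) (hΩ : Ω.PosDef)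
    (hrank : (Matrix.of fun i j =>
        ∫ ω, (ubar ω i - wbar ω i) * (ubar ω j - wbar ω j) ∂μ :
        Matrix (Fin n) (Fin n) ℝ).rank ≤ k) :
    ∃ E : Matrix (Fin k) (Fin n) ℝ, ∀ᵐ ω ∂μ,
      ∀ f : Fin n → ℝ, E *ᵥ f = E *ᵥ wbar ω → f ≠ wbar ω →
        (wbar ω - ubar ω) ⬝ᵥ (Ω *ᵥ (wbar ω - ubar ω))
          < (f - ubar ω) ⬝ᵥ (Ω *ᵥ (f - ubar ω)) := by
  classical
  set M : Matrix (Fin n) (Fin n) ℝ := Matrix.of fun i j =>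
      ∫ ω, (ubar ω i - wbar ω i) * (ubar ω j - wbar ω j) ∂μ with hM
  set d : α → Fin n → ℝ := fun ω => ubar ω - wbar ω with hd
  have hdmem : ∀ i, MemLp (fun ω => d ω i) 2 μ := fun i => (hu i).sub (hw i)
  -- Step A : vectors in the kernel of M are a.s. orthogonal to d
  have stepA : ∀ v : Fin n → ℝ, M *ᵥ v = 0 → ∀ᵐ ω ∂μ, v ⬝ᵥ d ω = 0 := by
    intro v hv
    have hint : ∀ i j : Fin n, Integrable (fun ω => v i * v j * (d ω i * d ω j)) μ :=
      fun i j => (l2_mul_integrable' (hdmem i) (hdmem j)).const_mul _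
    have key : ∫ ω, (v ⬝ᵥ d ω)^2 ∂μ = v ⬝ᵥ (M *ᵥ v) := by
      have h1 : ∀ ω, (v ⬝ᵥ d ω)^2 = ∑ i, ∑ j, v i * v j * (d ω i * d ω j) := by
        intro ω
        rw [sq, dotProduct, Finset.sum_mul_sum]
        exact Finset.sum_congr rfl fun i _ => Finset.sum_congr rfl fun j _ => by ring
      simp_rw [h1]
      rw [integral_finset_sum _ (fun i _ => integrable_finset_sum _ (fun j _ => hint i j))]
      have h2 : ∀ i, ∫ ω, ∑ j, v i * v j * (d ω i * d ω j) ∂μ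
          = ∑ j, v i * v j * ∫ ω, d ω i * d ω j ∂μ := by
        intro i
        rw [integral_finset_sum _ (fun j _ => hint i j)]
        exact Finset.sum_congr rfl fun j _ => integral_const_mul _ _
      simp_rw [h2]
      simp only [mulVec, dotProduct]
      refine Finset.sum_congr rfl fun i _ => ?_
      rw [Finset.mul_sum]
      refine Finset.sum_congr rfl fun j _ => ?_
      simp only [hM, Matrix.of_apply, hd, Pi.sub_apply]
      ring
    have hgL2 : MemLp (fun ω => v ⬝ᵥ d ω) 2 μ := by
      have hsum := memLp_finset_sum' (μ := μ) Finset.univ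
        (f := fun (i : Fin n) (ω : α) => v i * d ω i)
        (fun i _ => (hdmem i).const_mul (v i))
      have heq : (fun ω => v ⬝ᵥ d ω) = (∑ i : Fin n, fun ω => v i * d ω i) := by
        funext ω; simp [dotProduct, Finset.sum_apply]
      rw [heq]; exact hsum
    have hintsq : Integrable (fun ω => (v ⬝ᵥ d ω)^2) μ := by
      have := l2_mul_integrable' hgL2 hgL2
      refine this.congr ?_
      filter_upwards with ω
      rw [sq]
    have hzero : ∫ ω, (v ⬝ᵥ d ω)^2 ∂μ = 0 := by
      rw [key, hv, dotProduct_zero]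
    have := (integral_eq_zero_iff_of_nonneg (fun ω => sq_nonneg _) hintsq).mp hzero
    filter_upwards [this] with ω hω
    exact (pow_eq_zero_iff (two_ne_zero)).mp hω
  -- the kernel K and its orthogonal complement
  set K : Submodule ℝ (EuclideanSpace ℝ (Fin n)) := LinearMap.ker (M.mulVecLin ∘ₗ (WithLp.linearEquiv 2 ℝ (Fin n → ℝ)).toLinearMap) with hK
  have instK : FiniteDimensional ℝ K := inferInstance
  set bK := Module.finBasis ℝ K with hbK
  have hae : ∀ᵐ ω ∂μ, ∀ j, ((bK j : EuclideanSpace ℝ (Fin n)) : Fin n → ℝ) ⬝ᵥ d ω = 0 := by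
    rw [MeasureTheory.ae_all_iff]
    intro j
    refine stepA _ ?_
    have h := (bK j).2
    simp only [hK, LinearMap.mem_ker, LinearMap.coe_comp, Function.comp_apply, LinearEquiv.coe_coe,
      Matrix.mulVecLin_apply] at h
    exact h
  have haeK : ∀ᵐ ω ∂μ, (WithLp.toLp 2 (d ω) : EuclideanSpace ℝ (Fin n)) ∈ Kᗮ := by
    filter_upwards [hae] with ω hω
    have hall : ∀ u ∈ K, (inner ℝ u (WithLp.toLp 2 (d ω) : EuclideanSpace ℝ (Fin n)) : ℝ) = 0 := by
      intro u hu'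
      have hud : (inner ℝ u (WithLp.toLp 2 (d ω) : EuclideanSpace ℝ (Fin n)) : ℝ)
          = (u : Fin n → ℝ) ⬝ᵥ d ω := inner_eq_dot' u (WithLp.toLp 2 (d ω))
      rw [hud]
      have hrepr := congrArg (Subtype.val) (bK.sum_repr ⟨u, hu'⟩)
      push_cast at hrepr
      rw [← hrepr, WithLp.ofLp_sum, sum_dotProduct']
      refine Finset.sum_eq_zero fun j _ => ?_
      rw [WithLp.ofLp_smul, smul_dotProduct, hω j, smul_zero]
    exact (Submodule.mem_orthogonal K _).mpr hall
  -- dimension count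
  have hd1 : Module.finrank ℝ K + Module.finrank ℝ Kᗮ = n := by
    rw [Submodule.finrank_add_finrank_orthogonal]
    simp
  have hd2' : M.rank + Module.finrank ℝ (LinearMap.ker M.mulVecLin) = n := by
    rw [Matrix.rank, LinearMap.finrank_range_add_finrank_ker]
    simp [Module.finrank_pi]
  have hd2 : M.rank + Module.finrank ℝ K = n := by
    have heq : Module.finrank ℝ K = Module.finrank ℝ (LinearMap.ker M.mulVecLin) := by
        rw [hK, LinearMap.ker_comp, Submodule.comap_equiv_eq_map_symm, LinearEquiv.finrank_map_eq]
    rw [heq]; exact hd2'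
  have hWk : Module.finrank ℝ Kᗮ ≤ k := by omega
  set W : Submodule ℝ (Fin n → ℝ) :=
    Kᗮ.map (Ω.mulVecLin ∘ₗ (WithLp.linearEquiv 2 ℝ (Fin n → ℝ)).toLinearMap) with hW
  have hrk : Module.finrank ℝ W ≤ k := le_trans (Submodule.finrank_map_le _ _) hWk
  set b := Module.finBasis ℝ W with hb
  set Emat : Matrix (Fin k) (Fin n) ℝ := fun i j =>
    if h : (i : ℕ) < Module.finrank ℝ W then ((b ⟨(i : ℕ), h⟩ : W) : Fin n → ℝ) j else 0
    with hE
  refine ⟨Emat, ?_⟩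
  filter_upwards [haeK] with ω hω f hf hne
  have hdW : Ω *ᵥ d ω ∈ W := by
    rw [hW]
    exact Submodule.mem_map_of_mem hω
  set c : Fin n → ℝ := f - wbar ω with hc
  have hc0 : Emat *ᵥ c = 0 := by
    rw [hc, mulVec_sub, hf, sub_self]
  have horth : ∀ x ∈ W, x ⬝ᵥ c = 0 := by
    intro x hx
    have hrow : ∀ j : Fin (Module.finrank ℝ W), ((b j : W) : Fin n → ℝ) ⬝ᵥ c = 0 := by
      intro j
      have h2 : (fun j' => Emat (Fin.castLE hrk j) j') ⬝ᵥ c = 0 := congrFun hc0 _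
      have h3 : (fun j' => Emat (Fin.castLE hrk j) j') = ((b j : W) : Fin n → ℝ) := by
        funext j'
        have hlt : ((Fin.castLE hrk j : Fin k) : ℕ) < Module.finrank ℝ W := j.2
        rw [hE]
        simp only [dif_pos hlt]
        have heta : (⟨((Fin.castLE hrk j : Fin k) : ℕ), hlt⟩ :
            Fin (Module.finrank ℝ W)) = j := by ext; simp
        rw [heta]
      rwa [h3] at h2
    have hrepr := congrArg (Subtype.val) (b.sum_repr ⟨x, hx⟩)
    push_cast at hrepr
    rw [← hrepr, sum_dotProduct']
    refine Finset.sum_eq_zero fun j _ => ?_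
    rw [smul_dotProduct, hrow j, smul_zero]
  have hxc : (Ω *ᵥ d ω) ⬝ᵥ c = 0 := horth _ hdW
  have hsym : Ωᵀ = Ω := by simpa [Matrix.IsHermitian] using hΩ.1
  have hwu : wbar ω - ubar ω = -(d ω) := by rw [hd]; simp
  have hcross1 : c ⬝ᵥ (Ω *ᵥ (wbar ω - ubar ω)) = 0 := by
    rw [hwu, mulVec_neg, dotProduct_neg, dotProduct_comm, hxc, neg_zero]
  have hcross2 : (wbar ω - ubar ω) ⬝ᵥ (Ω *ᵥ c) = 0 := by
    rw [dotProduct_mulVec, ← mulVec_transpose, hsym, hwu, mulVec_neg, neg_dotProduct,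
      hxc, neg_zero]
  have hfu : f - ubar ω = c + (wbar ω - ubar ω) := by
    rw [hc, sub_add_sub_cancel]
  have hcpos : 0 < c ⬝ᵥ (Ω *ᵥ c) := by
    have hcne : c ≠ 0 := by rw [hc]; exact sub_ne_zero_of_ne hne
    simpa using hΩ.dotProduct_mulVec_pos hcne
  have hexp : (f - ubar ω) ⬝ᵥ (Ω *ᵥ (f - ubar ω))
      = c ⬝ᵥ (Ω *ᵥ c) + (wbar ω - ubar ω) ⬝ᵥ (Ω *ᵥ (wbar ω - ubar ω)) := by
    rw [hfu, mulVec_add, add_dotProduct, dotProduct_add, dotProduct_add, hcross1, hcross2]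
    ring
  rw [hexp]
  linarith
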